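/- Let p : E → B be a Hurewicz fibration, Δ : E → E^r_B the diagonal map e ↦ (e,…,e), and R a coefficient ring. If there exist cohomology classes u_1,…,u_k ∈ ker[Δ* : H*(E^r_B; R) → H*(E; R)] with u_1 ⌣ ⋯ ⌣ u_k ≠ 0 in H*(E^r_B; R), then TC_r[p : E → B] ≥ k. -/

import Mathlib

open Set unitInterval

universe u v

/-- `HasSecatLE p k`: the base admits an open cover by `k+1` sets,
each admitting a continuous local section of `p`. -/
def HasSecatLE {E : Type u} {B : Type v} [TopologicalSpace E] [TopologicalSpace B]
    (p : E → B) (k : ℕ) : Prop :=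
  ∃ U : Fin (k + 1) → Set B, (∀ i, IsOpen (U i)) ∧ (⋃ i, U i) = Set.univ ∧
    ∀ i, ∃ s : C(U i, E), ∀ x : U i, p (s x) = (x : B)

/-- The sectional category (Schwarz genus) of a map, valued in `ℕ∞`. -/
noncomputable def secat {E : Type u} {B : Type v} [TopologicalSpace E] [TopologicalSpace B]
    (p : E → B) : ℕ∞ :=
  ⨅ k ∈ {k : ℕ | HasSecatLE p k}, (k : ℕ∞)

/-- A Hurewicz fibration: a continuous map with the homotopy lifting property
with respect to all spaces. -/
def IsHurewiczFibration {E : Type u} {B : Type v} [TopologicalSpace E] [TopologicalSpace B]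
    (p : E → B) : Prop :=
  Continuous p ∧
    ∀ (Z : Type (max u v)) [TopologicalSpace Z] (H : C(Z × unitInterval, B)) (h : C(Z, E)),
      (∀ z, p (h z) = H (z, 0)) →
        ∃ H' : C(Z × unitInterval, E), (∀ z, H' (z, 0) = h z) ∧ ∀ q, p (H' q) = H q

/-- The standard time schedule `t_i = i/(r-1)`, `i = 0, …, r-1` in `[0,1]`. -/
noncomputable def schedule (r : ℕ) (i : Fin r) : unitInterval :=
  Set.projIcc 0 1 zero_le_one ((i : ℝ) / ((r : ℝ) - 1))

/-- The space `E^I_B` of paths in `E` along which `p` is constant. -/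
def FibConstPath {E : Type u} {B : Type v} [TopologicalSpace E] [TopologicalSpace B]
    (p : E → B) : Set C(unitInterval, E) :=
  {α | ∀ s t, p (α s) = p (α t)}

/-- The space `E^r_B` of `r`-tuples in `E` lying in a common fibre of `p`. -/
def ParamSpace {E : Type u} {B : Type v} [TopologicalSpace E] [TopologicalSpace B]
    (p : E → B) (r : ℕ) : Set (Fin r → E) :=
  {e | ∀ i j, p (e i) = p (e j)}

/-- The evaluation fibration `Π_r : E^I_B → E^r_B`. -/
noncomputable def paramEval {E : Type u} {B : Type v} [TopologicalSpace E] [TopologicalSpace B]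
    (p : E → B) (r : ℕ) (α : FibConstPath p) : ParamSpace p r :=
  ⟨fun i => α.1 (schedule r i), fun _ _ => α.2 _ _⟩

/-- The `r`-th sequential parametrized topological complexity `TC_r[p : E → B]`. -/
noncomputable def seqParamTC {E : Type u} {B : Type v} [TopologicalSpace E] [TopologicalSpace B]
    (p : E → B) (r : ℕ) : ℕ∞ :=
  secat (paramEval p r)

/-- The `r`-th sequential topological complexity `TC_r(X)` of a space. -/
noncomputable def seqTC (X : Type u) [TopologicalSpace X] (r : ℕ) : ℕ∞ :=
  secat (fun (α : C(unitInterval, X)) (i : Fin r) => α (schedule r i))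

/-- `HasCatLE Y k`: `Y` admits an open cover by `k+1` sets each contractible in `Y`. -/
def HasCatLE (Y : Type u) [TopologicalSpace Y] (k : ℕ) : Prop :=
  ∃ U : Fin (k + 1) → Set Y, (∀ i, IsOpen (U i)) ∧ (⋃ i, U i) = Set.univ ∧
    ∀ i, ∃ (H : C((U i) × unitInterval, Y)) (y : Y),
      (∀ x, H (x, 0) = (x.1 : Y)) ∧ (∀ x, H (x, 1) = y)

/-- The Lusternik–Schnirelmann category of a space, valued in `ℕ∞`. -/
noncomputable def LScat (Y : Type u) [TopologicalSpace Y] : ℕ∞ :=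
  ⨅ k ∈ {k : ℕ | HasCatLE Y k}, (k : ℕ∞)

/-- The inclusion of a subset as a continuous map. -/
def inclC {X : Type u} [TopologicalSpace X] (U : Set X) : C(↥U, X) :=
  ⟨Subtype.val, continuous_subtype_val⟩

/-- A multiplicative cohomology theory with coefficients in `R` (modelling the singular
cohomology ring `H^*(-; R)`): a homotopy-invariant contravariant functor into rings, whose
products vanish when the factors vanish on open sets (the key property of singular
cohomology used in Schwarz's cup-length lower bound for the sectional category). -/
structure CohomologyTheory (R : Type v) [CommRing R] : Type (max (u + 1) v) where
  coh : (X : Type u) → [inst : TopologicalSpace X] → Type u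
  ring : ∀ (X : Type u) [TopologicalSpace X], Ring (coh X)
  algebra : ∀ (X : Type u) [TopologicalSpace X], haveI := ring X; Algebra R (coh X)
  pull : ∀ {X Y : Type u} [TopologicalSpace X] [TopologicalSpace Y] (_ : C(X, Y)),
    haveI := ring X; haveI := ring Y; coh Y →+* coh X
  pull_id : ∀ (X : Type u) [TopologicalSpace X] (a : coh X), pull (ContinuousMap.id X) a = a
  pull_comp : ∀ {X Y Z : Type u} [TopologicalSpace X] [TopologicalSpace Y] [TopologicalSpace Z]
    (f : C(X, Y)) (g : C(Y, Z)) (a : coh Z), pull f (pull g a) = pull (g.comp f) a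
  homotopy_invariant : ∀ {X Y : Type u} [TopologicalSpace X] [TopologicalSpace Y]
    (f g : C(X, Y)), f.Homotopic g → ∀ a, pull f a = pull g a
  cup_vanish : ∀ {X : Type u} [TopologicalSpace X] (U V : Set X), IsOpen U → IsOpen V →
    ∀ a b : coh X,
      (haveI := ring ↥U; pull (inclC U) a = 0) →
      (haveI := ring ↥V; pull (inclC V) b = 0) →
      (haveI := ring X; haveI := ring ↥(U ∪ V : Set X);
        pull (inclC (U ∪ V)) (a * b) = 0)

attribute [instance] CohomologyTheory.ring

/-- The diagonal map `Δ : E → E^r_B`. -/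
def diagMap {E : Type u} {B : Type w} [TopologicalSpace E] [TopologicalSpace B]
    (p : E → B) (r : ℕ) : C(E, ↥(ParamSpace p r)) :=
  ⟨fun e => ⟨fun _ => e, fun _ _ => rfl⟩,
    Continuous.subtype_mk (continuous_pi fun _ => continuous_id) _⟩


section Aux

variable {R : Type v} [CommRing R] (T : CohomologyTheory.{u} R)

/-- Restriction of a class vanishing on a set vanishes on any smaller set. -/
lemma pull_incl_mono {X : Type u} [TopologicalSpace X] {A B : Set X} (h : A ⊆ B)
    (a : T.coh X) (hb : T.pull (inclC B) a = 0) : T.pull (inclC A) a = 0 := by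
  have hcomp : (inclC B).comp ⟨Set.inclusion h, continuous_inclusion h⟩ = inclC A := by
    ext x; rfl
  have := T.pull_comp (⟨Set.inclusion h, continuous_inclusion h⟩ : C(↥A, ↥B)) (inclC B) a
  rw [hcomp] at this
  rw [← this, hb, map_zero]

/-- A class whose restriction to `univ` vanishes is zero. -/
lemma pull_incl_univ_eq_zero {X : Type u} [TopologicalSpace X]
    (a : T.coh X) (h : T.pull (inclC (Set.univ : Set X)) a = 0) : a = 0 := by
  have hcomp : (inclC (Set.univ : Set X)).comp
      ⟨fun x => ⟨x, Set.mem_univ x⟩, Continuous.subtype_mk continuous_id _⟩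
      = ContinuousMap.id X := by ext x; rfl
  have := T.pull_comp
    (⟨fun x => ⟨x, Set.mem_univ x⟩, Continuous.subtype_mk continuous_id _⟩ :
      C(X, ↥(Set.univ : Set X))) (inclC (Set.univ : Set X)) a
  rw [hcomp, T.pull_id] at this
  rw [← this, h, map_zero]

/-- Schwarz's argument: if `X` is covered by `n+1` open sets and each element of a list
of length `> n` vanishes on each member of the cover, then the product is zero. -/
lemma prod_eq_zero_of_cover {X : Type u} [TopologicalSpace X] (n : ℕ)
    (U : Fin (n + 1) → Set X) (hU : ∀ i, IsOpen (U i)) (hcov : (⋃ i, U i) = Set.univ)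
    (L : List (T.coh X)) (hlen : n < L.length)
    (hvan : ∀ (j : ℕ) (hj : j < L.length) (i : Fin (n + 1)),
      T.pull (inclC (U i)) (L[j]'hj) = 0) : L.prod = 0 := by
  set S : ℕ → Set X := fun m => ⋃ i : Fin (n + 1), if (i : ℕ) ≤ m then U i else ∅ with hS
  have hSopen : ∀ m, IsOpen (S m) := by
    intro m
    exact isOpen_iUnion fun i => by split <;> simp [hU i, isOpen_empty]
  have key : ∀ m, m ≤ n → T.pull (inclC (S m)) ((L.take (m + 1)).prod) = 0 := by
    intro m
    induction m with
    | zero =>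
      intro _
      have h1 : (L.take 1).prod = L[0]'(by omega) := by
        rw [List.prod_take_succ L 0 (by omega)]
        simp
      rw [h1]
      refine pull_incl_mono T (B := U 0) ?_ _ (hvan 0 (by omega) 0)
      intro x hx
      simp only [hS, Set.mem_iUnion] at hx
      obtain ⟨i, hi⟩ := hx
      have h0 : (i : ℕ) ≤ 0 := by by_contra h; simp [h] at hi
      have : i = 0 := Fin.ext (Nat.le_zero.mp h0)
      rw [this] at hi; simpa using hi
    | succ m ih =>
      intro hmn
      have hm : m ≤ n := by omega
      have hSm : S (m + 1) = S m ∪ U ⟨m + 1, by omega⟩ := by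
        ext x
        simp only [hS, Set.mem_iUnion, Set.mem_union]
        constructor
        · rintro ⟨i, hi⟩
          by_cases hc : (i : ℕ) ≤ m + 1
          · rcases Nat.lt_or_ge (i : ℕ) (m + 1) with h | h
            · left; exact ⟨i, by simp [Nat.lt_succ_iff.mp h]; simpa [hc] using hi⟩
            · right
              have : i = (⟨m + 1, by omega⟩ : Fin (n + 1)) := by
                apply Fin.ext
                show (i : ℕ) = m + 1
                omega
              rw [this] at hi; simpa using hi
          · simp [hc] at hi
        · rintro (⟨i, hi⟩ | h)
          · by_cases hc : (i : ℕ) ≤ m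
            · exact ⟨i, by simp [hc] at hi ⊢; simpa [Nat.le_succ_of_le hc] using hi⟩
            · simp [hc] at hi
          · exact ⟨⟨m + 1, by omega⟩, by simpa using h⟩
      rw [List.prod_take_succ L (m + 1) (by omega), hSm]
      exact T.cup_vanish (S m) (U ⟨m + 1, by omega⟩) (hSopen m) (hU _) _ _
        (ih hm) (hvan (m + 1) (by omega) _)
  have hSn : S n = Set.univ := by
    rw [← hcov]
    ext x
    simp only [hS, Set.mem_iUnion]
    constructor
    · rintro ⟨i, hi⟩
      refine ⟨i, ?_⟩
      simpa [Nat.lt_succ_iff.mp i.isLt] using hi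
    · rintro ⟨i, hi⟩
      exact ⟨i, by simpa [Nat.lt_succ_iff.mp i.isLt] using hi⟩
  have h0 : (L.take (n + 1)).prod = 0 := by
    have := key n le_rfl
    rw [hSn] at this
    exact pull_incl_univ_eq_zero T _ this
  rw [← List.prod_take_mul_prod_drop L (n + 1), h0, zero_mul]

end Aux

/-- If classes `u_1, …, u_k` in the kernel of
`Δ^* : H^*(E^r_B; R) → H^*(E; R)` have nonzero cup product, then `TC_r[p] ≥ k`. -/
theorem stmt11 {R : Type v} [CommRing R] (T : CohomologyTheory.{u} R)
    {E B : Type u} [TopologicalSpace E] [TopologicalSpace B]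
    (p : E → B) (hp : IsHurewiczFibration p) (r : ℕ) (hr : 2 ≤ r) (k : ℕ)
    (u : Fin k → T.coh ↥(ParamSpace p r))
    (hker : ∀ i, T.pull (diagMap p r) (u i) = 0)
    (hprod : (List.ofFn u).prod ≠ 0) :
    (k : ℕ∞) ≤ seqParamTC p r := by
  rw [seqParamTC, secat]
  refine le_iInf₂ fun n hn => ?_
  by_contra hlt
  push_neg at hlt
  have hnk : n < k := by exact_mod_cast hlt
  obtain ⟨U, hUopen, hUcov, hUsec⟩ := hn
  -- each class vanishes on each member of the cover
  have hvan : ∀ (i : Fin (n + 1)) (j : Fin k), T.pull (inclC (U i)) (u j) = 0 := by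
    intro i j
    obtain ⟨s, hs⟩ := hUsec i
    -- the map sending x to the initial point of the path s x
    have hcont0 : ∀ (t : unitInterval), Continuous fun x : ↥(U i) => ((s x : C(unitInterval, E)) t) :=
      fun t => (continuous_eval_const t).comp
        (continuous_subtype_val.comp s.continuous)
    set g : C(↥(U i), E) := ⟨fun x => (s x : C(unitInterval, E)) 0, hcont0 0⟩ with hg
    -- homotopy from the inclusion to diag ∘ g
    have hHmem : ∀ (x : ↥(U i)) (t : unitInterval),
        (fun m : Fin r => (s x : C(unitInterval, E)) (σ t * schedule r m)) ∈ ParamSpace p r := by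
      intro x t m m'
      exact (s x).2 _ _
    set Hmap : unitInterval × ↥(U i) → ↥(ParamSpace p r) :=
      fun q => ⟨fun m => (s q.2 : C(unitInterval, E)) (σ q.1 * schedule r m), hHmem q.2 q.1⟩
      with hH
    have hHcont : Continuous Hmap := by
      refine Continuous.subtype_mk (continuous_pi fun m => ?_) _
      have hmul : Continuous fun q : unitInterval × ↥(U i) => σ q.1 * schedule r m := by
        refine Continuous.subtype_mk ?_ _
        exact (continuous_subtype_val.comp (continuous_symm.comp continuous_fst)).mul
          continuous_const
      have h1 : Continuous fun q : unitInterval × ↥(U i) =>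
          ((s q.2 : C(unitInterval, E)), σ q.1 * schedule r m) :=
        Continuous.prodMk ((continuous_subtype_val.comp s.continuous).comp continuous_snd) hmul
      exact continuous_eval.comp h1
    have hhtp : (inclC (U i)).Homotopic ((diagMap p r).comp g) := by
      refine ⟨⟨⟨Hmap, hHcont⟩, ?_, ?_⟩⟩
      · intro x
        apply Subtype.ext
        funext m
        have hx : ((x : ↥(ParamSpace p r)) : Fin r → E) m
            = (s x : C(unitInterval, E)) (schedule r m) := by
          rw [← hs x]; rfl
        show (s x : C(unitInterval, E)) (σ 0 * schedule r m)
            = ((inclC (U i) x : ↥(ParamSpace p r)) : Fin r → E) m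
        rw [show ((inclC (U i) x : ↥(ParamSpace p r)) : Fin r → E) m
            = ((x : ↥(ParamSpace p r)) : Fin r → E) m from rfl, hx]
        rw [unitInterval.symm_zero, one_mul]
      · intro x
        apply Subtype.ext
        funext m
        show (s x : C(unitInterval, E)) (σ 1 * schedule r m)
            = ((((diagMap p r).comp g) x : ↥(ParamSpace p r)) : Fin r → E) m
        rw [show ((((diagMap p r).comp g) x : ↥(ParamSpace p r)) : Fin r → E) m
            = (s x : C(unitInterval, E)) 0 from rfl]
        rw [unitInterval.symm_one, zero_mul]
    have := T.homotopy_invariant _ _ hhtp (u j)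
    rw [this, ← T.pull_comp g (diagMap p r) (u j), hker j, map_zero]
  -- apply the cup-length lemma
  refine hprod ?_
  refine prod_eq_zero_of_cover T n U hUopen hUcov (List.ofFn u)
    (by simpa using hnk) ?_
  intro j hj i
  have hjk : j < k := by simpa using hj
  have : (List.ofFn u)[j]'hj = u ⟨j, hjk⟩ := by simp
  rw [this]
  exact hvan i ⟨j, hjk⟩
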